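/- Let f be the largest eigenvalue function of a symmetric polynomial matrix F : ℝⁿ → S^p, and suppose γ : (0, ε) → ℝⁿ, λ_l : (0, ε) → ℝ, v^l : (0, ε) → ℝ^p (l = 1,…,r) are differentiable curves with λ_l(t) ≥ 0, Σ_l λ_l(t) = 1, ‖v^l(t)‖ = 1, and F(γ(t))v^l(t) = f(γ(t))v^l(t) for all t. Then d/dt [f(γ(t))] = ⟨u(t), γ'(t)⟩, where u(t) := Σ_{l=1}^r λ_l(t) Σ_{i,j=1}^p v_i^l(t) v_j^l(t) ∇f_{ij}(γ(t)). -/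

import Mathlib

open Metric Set Filter Topology
open RealInnerProductSpace

/-- `μ` is the largest eigenvalue of the matrix `A`. -/
def IsLargestEigenvalue {ι : Type*} [Fintype ι] (A : Matrix ι ι ℝ) (μ : ℝ) : Prop :=
  IsGreatest {t : ℝ | ∃ v : EuclideanSpace ℝ ι, v ≠ 0 ∧ ∀ i, ∑ j, A i j * v j = t * v i} μ

private lemma sum_mul_swap {K M : Type*} [Fintype K] [Fintype M] (a : K → M → ℝ) (b : K → ℝ) :
    ∑ k, (∑ m, a k m) * b k = ∑ m, ∑ k, a k m * b k := by
  simp_rw [Finset.sum_mul]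
  exact Finset.sum_comm

/-- along differentiable curves of weights and unit eigenvectors,
`d/dt f(γ(t)) = ⟨u(t), γ'(t)⟩` where
`u(t) = Σ_l λ_l(t) Σ_{i,j} v_i^l(t) v_j^l(t) ∇f_{ij}(γ(t))`. -/
theorem deriv_largest_eigenvalue_along_curve {n p r : ℕ}
    (F : EuclideanSpace ℝ (Fin n) → Matrix (Fin p) (Fin p) ℝ)
    (hpoly : ∀ i j, ∃ P : MvPolynomial (Fin n) ℝ,
      ∀ x : EuclideanSpace ℝ (Fin n), F x i j = MvPolynomial.eval (fun k => x k) P)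
    (hsym : ∀ x i j, F x i j = F x j i)
    (f : EuclideanSpace ℝ (Fin n) → ℝ)
    (hf : ∀ x, IsLargestEigenvalue (F x) (f x))
    (Df : Fin p → Fin p → EuclideanSpace ℝ (Fin n) → EuclideanSpace ℝ (Fin n))
    (hDf : ∀ i j x, HasGradientAt (fun y => F y i j) (Df i j x) x)
    (ε : ℝ) (hε : 0 < ε)
    (γ : ℝ → EuclideanSpace ℝ (Fin n)) (γ' : ℝ → EuclideanSpace ℝ (Fin n))
    (lam : Fin r → ℝ → ℝ) (lam' : Fin r → ℝ → ℝ)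
    (v : Fin r → ℝ → EuclideanSpace ℝ (Fin p))
    (v' : Fin r → ℝ → EuclideanSpace ℝ (Fin p))
    (hγ : ∀ t ∈ Set.Ioo (0 : ℝ) ε, HasDerivAt γ (γ' t) t)
    (hlamd : ∀ l, ∀ t ∈ Set.Ioo (0 : ℝ) ε, HasDerivAt (lam l) (lam' l t) t)
    (hvd : ∀ l, ∀ t ∈ Set.Ioo (0 : ℝ) ε, HasDerivAt (v l) (v' l t) t)
    (hlam0 : ∀ l, ∀ t ∈ Set.Ioo (0 : ℝ) ε, 0 ≤ lam l t)
    (hlamsum : ∀ t ∈ Set.Ioo (0 : ℝ) ε, ∑ l, lam l t = 1)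
    (hvnorm : ∀ l, ∀ t ∈ Set.Ioo (0 : ℝ) ε, ‖v l t‖ = 1)
    (heig : ∀ l, ∀ t ∈ Set.Ioo (0 : ℝ) ε, ∀ i,
      ∑ j, F (γ t) i j * v l t j = f (γ t) * v l t i) :
    ∀ t ∈ Set.Ioo (0 : ℝ) ε,
      HasDerivAt (fun s => f (γ s))
        (∑ k, (∑ l, lam l t * ∑ i, ∑ j, v l t i * v l t j * Df i j (γ t) k) * γ' t k) t := by
  intro t ht
  have hmem : Set.Ioo (0 : ℝ) ε ∈ 𝓝 t := isOpen_Ioo.mem_nhds ht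
  -- unit norm as a sum of squares, at every point of the interval
  have hvvs : ∀ s ∈ Set.Ioo (0 : ℝ) ε, ∀ l, ∑ i, v l s i * v l s i = 1 := by
    intro s hs l
    have h2 : ⟪v l s, v l s⟫ = 1 := by
      rw [real_inner_self_eq_norm_sq, hvnorm l s hs]; norm_num
    rw [PiLp.inner_apply] at h2
    simpa [RCLike.inner_apply, conj_trivial, sq] using h2
  -- f ∘ γ agrees on the interval with the explicit quadratic form expression
  have hg : ∀ s ∈ Set.Ioo (0 : ℝ) ε,
      (∑ l, lam l s * ∑ i, ∑ j, F (γ s) i j * v l s j * v l s i) = f (γ s) := by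
    intro s hs
    have key : ∀ l : Fin r, (∑ i, ∑ j, F (γ s) i j * v l s j * v l s i) = f (γ s) := by
      intro l
      have h1 : ∀ i, ∑ j, F (γ s) i j * v l s j * v l s i
          = f (γ s) * (v l s i * v l s i) := by
        intro i
        rw [← Finset.sum_mul, heig l s hs i]; ring
      rw [Finset.sum_congr rfl (fun i _ => h1 i), ← Finset.mul_sum, hvvs s hs l, mul_one]
    simp only [key]
    rw [← Finset.sum_mul, hlamsum s hs, one_mul]
  -- coordinate derivatives
  have hvi : ∀ l i, HasDerivAt (fun s => v l s i) (v' l t i) t := fun l i =>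
    (EuclideanSpace.proj i : EuclideanSpace ℝ (Fin p) →L[ℝ] ℝ).hasFDerivAt.comp_hasDerivAt t
      (hvd l t ht)
  have hFij : ∀ i j, HasDerivAt (fun s => F (γ s) i j)
      (∑ k, Df i j (γ t) k * γ' t k) t := by
    intro i j
    have h := (hDf i j (γ t)).hasFDerivAt.comp_hasDerivAt t (hγ t ht)
    simpa [InnerProductSpace.toDual_apply_apply, PiLp.inner_apply, RCLike.inner_apply,
      conj_trivial, mul_comm, Function.comp_def] using h
  -- sum of lam' vanishes
  have hlam'0 : ∑ l, lam' l t = 0 := by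
    have hd : HasDerivAt (fun s => ∑ l, lam l s) (∑ l, lam' l t) t :=
      HasDerivAt.fun_sum fun l _ => hlamd l t ht
    have hc : HasDerivAt (fun s => ∑ l, lam l s) 0 t := by
      refine (hasDerivAt_const t (1 : ℝ)).congr_of_eventuallyEq ?_
      filter_upwards [hmem] with s hs
      exact hlamsum s hs
    exact hd.unique hc
  -- orthogonality of v and v'
  have hvv' : ∀ l, ∑ i, v l t i * v' l t i = 0 := by
    intro l
    have hd : HasDerivAt (fun s => ∑ i, v l s i * v l s i)
        (∑ i, (v' l t i * v l t i + v l t i * v' l t i)) t :=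
      HasDerivAt.fun_sum fun i _ => (hvi l i).mul (hvi l i)
    have hc : HasDerivAt (fun s => ∑ i, v l s i * v l s i) 0 t := by
      refine (hasDerivAt_const t (1 : ℝ)).congr_of_eventuallyEq ?_
      filter_upwards [hmem] with s hs
      exact hvvs s hs l
    have h0 : ∑ i, (v' l t i * v l t i + v l t i * v' l t i) = 0 := hd.unique hc
    have h2 : ∑ i, (v' l t i * v l t i + v l t i * v' l t i)
        = 2 * ∑ i, v l t i * v' l t i := by
      rw [Finset.mul_sum]; exact Finset.sum_congr rfl fun i _ => by ring
    linarith [h0, h2.symm.trans h0]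
  -- the raw derivative of the explicit expression
  set dF : Fin p → Fin p → ℝ := fun i j => ∑ k, Df i j (γ t) k * γ' t k with hdF
  have hD : HasDerivAt (fun s => ∑ l, lam l s * ∑ i, ∑ j, F (γ s) i j * v l s j * v l s i)
      (∑ l, (lam' l t * (∑ i, ∑ j, F (γ t) i j * v l t j * v l t i) +
        lam l t * ∑ i, ∑ j,
          ((dF i j * v l t j + F (γ t) i j * v' l t j) * v l t i +
            F (γ t) i j * v l t j * v' l t i))) t := by
    refine HasDerivAt.fun_sum fun l _ => (hlamd l t ht).mul (HasDerivAt.fun_sum fun i _ =>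
      HasDerivAt.fun_sum fun j _ => ((hFij i j).mul (hvi l j)).mul (hvi l i))
  -- transfer to f ∘ γ
  have hDf' : HasDerivAt (fun s => f (γ s))
      (∑ l, (lam' l t * (∑ i, ∑ j, F (γ t) i j * v l t j * v l t i) +
        lam l t * ∑ i, ∑ j,
          ((dF i j * v l t j + F (γ t) i j * v' l t j) * v l t i +
            F (γ t) i j * v l t j * v' l t i))) t := by
    refine hD.congr_of_eventuallyEq ?_
    filter_upwards [hmem] with s hs
    exact (hg s hs).symm
  -- now identify the derivative with the claimed expression
  convert hDf' using 1
  -- key eigenvector identities at t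
  have key : ∀ l : Fin r, (∑ i, ∑ j, F (γ t) i j * v l t j * v l t i) = f (γ t) := by
    intro l
    have h1 : ∀ i, ∑ j, F (γ t) i j * v l t j * v l t i
        = f (γ t) * (v l t i * v l t i) := by
      intro i
      rw [← Finset.sum_mul, heig l t ht i]; ring
    rw [Finset.sum_congr rfl (fun i _ => h1 i), ← Finset.mul_sum, hvvs t ht l, mul_one]
  have hC : ∀ l, ∑ i, ∑ j, F (γ t) i j * v l t j * v' l t i = 0 := by
    intro l
    have h1 : ∀ i, ∑ j, F (γ t) i j * v l t j * v' l t i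
        = f (γ t) * (v l t i * v' l t i) := by
      intro i
      rw [← Finset.sum_mul, heig l t ht i]; ring
    rw [Finset.sum_congr rfl (fun i _ => h1 i), ← Finset.mul_sum, hvv' l, mul_zero]
  have hB : ∀ l, ∑ i, ∑ j, F (γ t) i j * v' l t j * v l t i = 0 := by
    intro l
    rw [Finset.sum_comm]
    have h1 : ∀ j, ∑ i, F (γ t) i j * v' l t j * v l t i
        = f (γ t) * (v l t j * v' l t j) := by
      intro j
      have h2 : ∑ i, F (γ t) i j * v' l t j * v l t i
          = (∑ i, F (γ t) j i * v l t i) * v' l t j := by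
        rw [Finset.sum_mul]
        exact Finset.sum_congr rfl fun i _ => by rw [hsym (γ t) i j]; ring
      rw [h2, heig l t ht j]; ring
    rw [Finset.sum_congr rfl (fun j _ => h1 j), ← Finset.mul_sum, hvv' l, mul_zero]
  -- split the raw derivative
  have hsplit : ∀ l, (∑ i, ∑ j,
      ((dF i j * v l t j + F (γ t) i j * v' l t j) * v l t i +
        F (γ t) i j * v l t j * v' l t i))
      = (∑ i, ∑ j, dF i j * v l t j * v l t i)
        + (∑ i, ∑ j, F (γ t) i j * v' l t j * v l t i)
        + (∑ i, ∑ j, F (γ t) i j * v l t j * v' l t i) := by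
    intro l
    rw [← Finset.sum_add_distrib, ← Finset.sum_add_distrib]
    refine Finset.sum_congr rfl fun i _ => ?_
    rw [← Finset.sum_add_distrib, ← Finset.sum_add_distrib]
    exact Finset.sum_congr rfl fun j _ => by ring
  have hzero : ∑ l, lam' l t * f (γ t) = 0 := by
    rw [← Finset.sum_mul, hlam'0, zero_mul]
  calc (∑ k, (∑ l, lam l t * ∑ i, ∑ j, v l t i * v l t j * Df i j (γ t) k) * γ' t k)
       = ∑ l, ∑ k, (lam l t * ∑ i, ∑ j, v l t i * v l t j * Df i j (γ t) k) * γ' t k := by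
        rw [sum_mul_swap]
    _ = ∑ l, lam l t * ∑ i, ∑ j, dF i j * v l t j * v l t i := by
        refine Finset.sum_congr rfl fun l _ => ?_
        calc ∑ k, (lam l t * ∑ i, ∑ j, v l t i * v l t j * Df i j (γ t) k) * γ' t k
             = ∑ k, ∑ i, ∑ j, lam l t * (v l t i * v l t j * Df i j (γ t) k * γ' t k) := by
              refine Finset.sum_congr rfl fun k _ => ?_
              rw [Finset.mul_sum, Finset.sum_mul]
              refine Finset.sum_congr rfl fun i _ => ?_
              rw [Finset.mul_sum, Finset.sum_mul]
              exact Finset.sum_congr rfl fun j _ => by ring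
          _ = ∑ i, ∑ k, ∑ j, lam l t * (v l t i * v l t j * Df i j (γ t) k * γ' t k) :=
              Finset.sum_comm
          _ = ∑ i, ∑ j, ∑ k, lam l t * (v l t i * v l t j * Df i j (γ t) k * γ' t k) :=
              Finset.sum_congr rfl fun i _ => Finset.sum_comm
          _ = lam l t * ∑ i, ∑ j, dF i j * v l t j * v l t i := by
              rw [Finset.mul_sum]
              refine Finset.sum_congr rfl fun i _ => ?_
              rw [Finset.mul_sum]
              refine Finset.sum_congr rfl fun j _ => ?_
              show _ = lam l t * ((∑ k, Df i j (γ t) k * γ' t k) * v l t j * v l t i)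
              rw [Finset.sum_mul, Finset.sum_mul, Finset.mul_sum]
              exact Finset.sum_congr rfl fun k _ => by ring
    _ = ∑ l, (lam' l t * f (γ t) + lam l t * ∑ i, ∑ j, dF i j * v l t j * v l t i) := by
        rw [Finset.sum_add_distrib, hzero, zero_add]
    _ = ∑ l, (lam' l t * (∑ i, ∑ j, F (γ t) i j * v l t j * v l t i) +
        lam l t * ∑ i, ∑ j,
          ((dF i j * v l t j + F (γ t) i j * v' l t j) * v l t i +
            F (γ t) i j * v l t j * v' l t i)) := by
        refine Finset.sum_congr rfl fun l _ => ?_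
        rw [hsplit l, key l, hB l, hC l, add_zero, add_zero]
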